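/- The GAN value function V(D) = E_{x∼p_data}[log D(x)] + E_{x∼p_G}[log(1−D(x))], for fixed pmfs p_data and p_G on a finite set, is maximized over functions D : X → (0,1) by D(x) = p_data(x)/(p_data(x)+p_G(x)), and the maximal value equals −log 4 + 2·JSD(p_data‖p_G), where JSD is the Jensen–Shannon divergence. -/
import Mathlib

open Real

lemma gan_aux_le (p D s : ℝ) (hp : 0 ≤ p) (hs : 0 < s) (hD : 0 < D) :
    p * Real.log D ≤ p * Real.log (p / s) + (D * s - p) := by
  rcases eq_or_lt_of_le hp with h | h
  · simp [← h]
    positivity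
  · have h1 : 0 < D * s / p := by positivity
    have h2 : Real.log (D * s / p) ≤ D * s / p - 1 := Real.log_le_sub_one_of_pos h1
    have h3 : Real.log (D * s / p) = Real.log D - Real.log (p / s) := by
      rw [Real.log_div (by positivity) (ne_of_gt h), Real.log_mul (ne_of_gt hD) (ne_of_gt hs),
        Real.log_div (ne_of_gt h) (ne_of_gt hs)]
      ring
    rw [h3] at h2
    have := mul_le_mul_of_nonneg_left h2 hp
    have h4 : p * (D * s / p - 1) = D * s - p := by field_simp
    nlinarith

lemma gan_aux_half (p s : ℝ) (hp : 0 ≤ p) (hs : 0 < s) :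
    p * Real.log (p / (s / 2)) = p * Real.log (p / s) + p * Real.log 2 := by
  rcases eq_or_lt_of_le hp with h | h
  · simp [← h]
  · have : p / (s / 2) = p / s * 2 := by field_simp
    rw [this, Real.log_mul (by positivity) two_ne_zero]
    ring

/-- The GAN value function `V(D) = E_{p_data}[log D] + E_{p_G}[log (1-D)]` over discriminators
`D : X → (0,1)` is maximized by `D*(x) = p_data x / (p_data x + p_G x)`, and the maximum value
is `-log 4 + 2 JSD(p_data‖p_G)`, where `JSD` is the Jensen–Shannon divergence. -/
theorem gan_optimal_discriminator_value
    {X : Type*} [Fintype X] (pdata pG : X → ℝ)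
    (hdata_nonneg : ∀ x, 0 ≤ pdata x) (hdata_sum : ∑ x, pdata x = 1)
    (hG_nonneg : ∀ x, 0 ≤ pG x) (hG_sum : ∑ x, pG x = 1)
    (hpos : ∀ x, 0 < pdata x + pG x) :
    (∀ D : X → ℝ, (∀ x, 0 < D x ∧ D x < 1) →
      (∑ x, pdata x * Real.log (D x)) + (∑ x, pG x * Real.log (1 - D x)) ≤
        (∑ x, pdata x * Real.log (pdata x / (pdata x + pG x))) +
          (∑ x, pG x * Real.log (pG x / (pdata x + pG x)))) ∧
    (∑ x, pdata x * Real.log (pdata x / (pdata x + pG x))) +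
        (∑ x, pG x * Real.log (pG x / (pdata x + pG x))) =
      -Real.log 4 +
        2 * ((1 / 2) * (∑ x, pdata x * Real.log (pdata x / ((pdata x + pG x) / 2))) +
             (1 / 2) * (∑ x, pG x * Real.log (pG x / ((pdata x + pG x) / 2)))) := by
  constructor
  · intro D hD
    rw [← Finset.sum_add_distrib, ← Finset.sum_add_distrib]
    apply Finset.sum_le_sum
    intro x _
    have h1 := gan_aux_le (pdata x) (D x) (pdata x + pG x) (hdata_nonneg x) (hpos x) (hD x).1
    have h2 := gan_aux_le (pG x) (1 - D x) (pdata x + pG x) (hG_nonneg x) (hpos x)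
      (by linarith [(hD x).2])
    nlinarith
  · have h1 : ∀ x : X, pdata x * Real.log (pdata x / ((pdata x + pG x) / 2)) =
        pdata x * Real.log (pdata x / (pdata x + pG x)) + pdata x * Real.log 2 :=
      fun x => gan_aux_half _ _ (hdata_nonneg x) (hpos x)
    have h2 : ∀ x : X, pG x * Real.log (pG x / ((pdata x + pG x) / 2)) =
        pG x * Real.log (pG x / (pdata x + pG x)) + pG x * Real.log 2 :=
      fun x => gan_aux_half _ _ (hG_nonneg x) (hpos x)
    simp only [h1, h2, Finset.sum_add_distrib, ← Finset.sum_mul, hdata_sum, hG_sum]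
    have h4 : Real.log 4 = 2 * Real.log 2 := by
      rw [show (4:ℝ) = 2^2 by norm_num, Real.log_pow]; push_cast; ring
    rw [h4]; ring
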